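/- Fix y ∈ {0,1}, and assume: consistency (P-almost surely, if D = 0 then Y = Y⁰); ignorability, i.e. for all a ∈ 𝒜, x ∈ 𝒳, and s, y', d ∈ {0,1} with P(A=a, X=x, S=s) > 0, P(Y⁰=y', D=d | A=a, X=x, S=s) = P(Y⁰=y' | A=a, X=x, S=s) · P(D=d | A=a, X=x, S=s); and positivity, i.e. P(D=0, A=a, X=x, S=s) > 0 whenever P(A=a, X=x, S=s) > 0. Then the inverse-probability-weighted mean recovers the marginal potential-outcome probability: E[ 1{D=0} · 1{Y=y} / (1 − π(A, X, S)) ] = P(Y⁰ = y). -/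

import Mathlib

open MeasureTheory

/-- `pr P E` is the probability of the event `E` as a real number. -/
noncomputable def pr {Ω : Type*} [MeasurableSpace Ω] (P : Measure Ω) (E : Set Ω) : ℝ :=
  (P E).toReal

/-- `cpr P E F = P(E | F) = P(E ∩ F) / P(F)`, the conditional probability of `E` given `F`. -/
noncomputable def cpr {Ω : Type*} [MeasurableSpace Ω] (P : Measure Ω) (E F : Set Ω) : ℝ :=
  pr P (E ∩ F) / pr P F

lemma pr_nonneg {Ω : Type*} [MeasurableSpace Ω] (P : Measure Ω) (E : Set Ω) : 0 ≤ pr P E :=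
  ENNReal.toReal_nonneg

lemma pr_mono_null {Ω : Type*} [MeasurableSpace Ω] (P : Measure Ω) [IsFiniteMeasure P]
    {E F : Set Ω} (h : E ⊆ F) (hF : pr P F = 0) : pr P E = 0 := by
  have hF0 : P F = 0 := by
    have := (ENNReal.toReal_eq_zero_iff _).mp hF
    rcases this with h0 | htop
    · exact h0
    · exact absurd htop (measure_ne_top P F)
  simp [pr, measure_mono_null h hF0]

lemma pr_tsum {Ω ι : Type*} [MeasurableSpace Ω] [Countable ι] (P : Measure Ω)
    [IsFiniteMeasure P] (f : ι → Set Ω) (hm : ∀ i, MeasurableSet (f i))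
    (hd : Pairwise (Function.onFun Disjoint f)) :
    ∑' i, pr P (f i) = pr P (⋃ i, f i) := by
  unfold pr
  rw [measure_iUnion hd hm, ENNReal.tsum_toReal_eq (fun i => measure_ne_top P _)]

lemma pr_union {Ω : Type*} [MeasurableSpace Ω] (P : Measure Ω) [IsFiniteMeasure P]
    {E F : Set Ω} (hd : Disjoint E F) (hF : MeasurableSet F) :
    pr P (E ∪ F) = pr P E + pr P F := by
  unfold pr
  rw [measure_union hd hF, ENNReal.toReal_add (measure_ne_top P _) (measure_ne_top P _)]

/-- under consistency, ignorability, and positivity, the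
inverse-probability-weighted mean recovers the marginal potential-outcome probability:
`E[1{D=0}·1{Y=y}/(1−π(A,X,S))] = P(Y⁰=y)`, where `π(a,x,s) = P(D=1 | A=a, X=x, S=s)` and
the expectation is the series
`Σ_{(a,x,s)} P(D=0, Y=y, A=a, X=x, S=s)/(1−π(a,x,s))`.
Binary variables are modelled as `Bool`-valued, with `1 = true` and `0 = false`. -/
theorem stmt_10
    {Ω 𝒜 𝒳 : Type*} [MeasurableSpace Ω]
    [MeasurableSpace 𝒜] [MeasurableSingletonClass 𝒜] [Countable 𝒜] [Nonempty 𝒜]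
    [MeasurableSpace 𝒳] [MeasurableSingletonClass 𝒳] [Countable 𝒳] [Nonempty 𝒳]
    (P : Measure Ω) [IsProbabilityMeasure P]
    (Y0 Y D S : Ω → Bool) (A : Ω → 𝒜) (X : Ω → 𝒳)
    (hY0 : Measurable Y0) (hY : Measurable Y) (hD : Measurable D) (hS : Measurable S)
    (hA : Measurable A) (hX : Measurable X)
    (y : Bool)
    (hcons : ∀ᵐ ω ∂P, D ω = false → Y ω = Y0 ω)
    (hig : ∀ (a : 𝒜) (x : 𝒳) (s y' d : Bool),
      0 < pr P {ω | A ω = a ∧ X ω = x ∧ S ω = s} →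
      cpr P {ω | Y0 ω = y' ∧ D ω = d} {ω | A ω = a ∧ X ω = x ∧ S ω = s} =
        cpr P {ω | Y0 ω = y'} {ω | A ω = a ∧ X ω = x ∧ S ω = s} *
          cpr P {ω | D ω = d} {ω | A ω = a ∧ X ω = x ∧ S ω = s})
    (hposD : ∀ (a : 𝒜) (x : 𝒳) (s : Bool),
      0 < pr P {ω | A ω = a ∧ X ω = x ∧ S ω = s} →
      0 < pr P {ω | D ω = false ∧ A ω = a ∧ X ω = x ∧ S ω = s}) :
    (∑' (a : 𝒜) (x : 𝒳) (s : Bool),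
        pr P {ω | D ω = false ∧ Y ω = y ∧ A ω = a ∧ X ω = x ∧ S ω = s} /
          (1 - cpr P {ω | D ω = true} {ω | A ω = a ∧ X ω = x ∧ S ω = s})) =
      pr P {ω | Y0 ω = y} := by
  classical
  -- key pointwise identity
  have key : ∀ (a : 𝒜) (x : 𝒳) (s : Bool),
      pr P {ω | D ω = false ∧ Y ω = y ∧ A ω = a ∧ X ω = x ∧ S ω = s} /
        (1 - cpr P {ω | D ω = true} {ω | A ω = a ∧ X ω = x ∧ S ω = s}) =
      pr P {ω | Y0 ω = y ∧ A ω = a ∧ X ω = x ∧ S ω = s} := by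
    intro a x s
    set F : Set Ω := {ω | A ω = a ∧ X ω = x ∧ S ω = s} with hFdef
    have hFmeas : MeasurableSet F := by
      have : F = A ⁻¹' {a} ∩ (X ⁻¹' {x} ∩ S ⁻¹' {s}) := by
        ext ω
        simp only [hFdef, Set.mem_setOf_eq, Set.mem_inter_iff, Set.mem_preimage,
          Set.mem_singleton_iff]
      rw [this]
      exact (hA (measurableSet_singleton a)).inter
        ((hX (measurableSet_singleton x)).inter (hS (measurableSet_singleton s)))
    by_cases hpF : 0 < pr P F
    · -- positive case
      have hpF' : pr P F ≠ 0 := ne_of_gt hpF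
      have hpos0 : 0 < pr P ({ω | D ω = false} ∩ F) := by
        have := hposD a x s hpF
        have hset : {ω | D ω = false ∧ A ω = a ∧ X ω = x ∧ S ω = s} =
            {ω | D ω = false} ∩ F := by
          ext ω
          simp only [hFdef, Set.mem_setOf_eq, Set.mem_inter_iff]
        rwa [hset] at this
      -- consistency: replace Y by Y0 in the numerator
      have hcongr : pr P {ω | D ω = false ∧ Y ω = y ∧ A ω = a ∧ X ω = x ∧ S ω = s} =
          pr P ({ω | Y0 ω = y ∧ D ω = false} ∩ F) := by
        unfold pr
        congr 1
        apply measure_congr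
        filter_upwards [hcons] with ω h
        have : (ω ∈ {ω | D ω = false ∧ Y ω = y ∧ A ω = a ∧ X ω = x ∧ S ω = s}) ↔
            (ω ∈ ({ω | Y0 ω = y ∧ D ω = false} ∩ F)) := by
          simp only [Set.mem_setOf_eq, Set.mem_inter_iff, hFdef]
          constructor
          · rintro ⟨hd, hy, ha, hx, hs⟩
            exact ⟨⟨(h hd) ▸ hy, hd⟩, ha, hx, hs⟩
          · rintro ⟨⟨hy0, hd⟩, ha, hx, hs⟩
            exact ⟨hd, (h hd).symm ▸ hy0, ha, hx, hs⟩
        exact propext this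
      -- additivity over D
      have hadd : pr P ({ω | D ω = true} ∩ F) + pr P ({ω | D ω = false} ∩ F) = pr P F := by
        have hunion : ({ω | D ω = true} ∩ F) ∪ ({ω | D ω = false} ∩ F) = F := by
          ext ω
          simp only [Set.mem_union, Set.mem_inter_iff, Set.mem_setOf_eq]
          cases hω : D ω <;> simp [hω]
        have hdisj : Disjoint ({ω | D ω = true} ∩ F) ({ω | D ω = false} ∩ F) := by
          apply Set.disjoint_left.mpr
          rintro ω ⟨h1, _⟩ ⟨h2, _⟩
          simp only [Set.mem_setOf_eq] at h1 h2
          rw [h1] at h2; simp at h2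
        have hm : MeasurableSet ({ω | D ω = false} ∩ F) :=
          (hD (measurableSet_singleton false)).inter hFmeas
        rw [← pr_union P hdisj hm, hunion]
      -- denominator
      have hden : 1 - cpr P {ω | D ω = true} F = pr P ({ω | D ω = false} ∩ F) / pr P F := by
        unfold cpr
        field_simp
        linarith [hadd]
      -- ignorability
      have hig' := hig a x s y false hpF
      unfold cpr at hig'
      have hN : pr P ({ω | Y0 ω = y ∧ D ω = false} ∩ F) * pr P F =
          pr P ({ω | Y0 ω = y} ∩ F) * pr P ({ω | D ω = false} ∩ F) := by
        field_simp at hig'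
        rw [← hFdef] at hig'
        have h2 : (pr P ({ω | Y0 ω = y ∧ D ω = false} ∩ F) * pr P F) * pr P F =
            (pr P ({ω | Y0 ω = y} ∩ F) * pr P ({ω | D ω = false} ∩ F)) * pr P F := by
          ring_nf
          ring_nf at hig'
          field_simp at hig'
          linear_combination (pr P F) * hig'
        exact mul_right_cancel₀ hpF' h2
      have hRHS : {ω | Y0 ω = y ∧ A ω = a ∧ X ω = x ∧ S ω = s} = {ω | Y0 ω = y} ∩ F := by
        ext ω
        simp only [hFdef, Set.mem_setOf_eq, Set.mem_inter_iff]
      rw [hcongr, hden, hRHS, div_div_eq_mul_div, div_eq_iff (ne_of_gt hpos0)]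
      linarith [hN]
    · -- null case
      have hpF0 : pr P F = 0 := le_antisymm (not_lt.mp hpF) (pr_nonneg P F)
      have h1 : pr P {ω | D ω = false ∧ Y ω = y ∧ A ω = a ∧ X ω = x ∧ S ω = s} = 0 := by
        apply pr_mono_null P _ hpF0
        intro ω hω
        exact ⟨hω.2.2.1, hω.2.2.2.1, hω.2.2.2.2⟩
      have h2 : pr P {ω | Y0 ω = y ∧ A ω = a ∧ X ω = x ∧ S ω = s} = 0 := by
        apply pr_mono_null P _ hpF0
        intro ω hω
        exact ⟨hω.2.1, hω.2.2.1, hω.2.2.2⟩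
      rw [h1, h2, zero_div]
  have m4 : ∀ (a : 𝒜) (x : 𝒳) (s : Bool),
      MeasurableSet {ω | Y0 ω = y ∧ A ω = a ∧ X ω = x ∧ S ω = s} := by
    intro a x s
    have : {ω | Y0 ω = y ∧ A ω = a ∧ X ω = x ∧ S ω = s} =
        Y0 ⁻¹' {y} ∩ (A ⁻¹' {a} ∩ (X ⁻¹' {x} ∩ S ⁻¹' {s})) := by
      ext ω
      simp only [Set.mem_setOf_eq, Set.mem_inter_iff, Set.mem_preimage, Set.mem_singleton_iff]
    rw [this]
    exact (hY0 (measurableSet_singleton y)).inter ((hA (measurableSet_singleton a)).inter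
      ((hX (measurableSet_singleton x)).inter (hS (measurableSet_singleton s))))
  have m3 : ∀ (a : 𝒜) (x : 𝒳), MeasurableSet {ω | Y0 ω = y ∧ A ω = a ∧ X ω = x} := by
    intro a x
    have : {ω | Y0 ω = y ∧ A ω = a ∧ X ω = x} =
        Y0 ⁻¹' {y} ∩ (A ⁻¹' {a} ∩ X ⁻¹' {x}) := by
      ext ω
      simp only [Set.mem_setOf_eq, Set.mem_inter_iff, Set.mem_preimage, Set.mem_singleton_iff]
    rw [this]
    exact (hY0 (measurableSet_singleton y)).inter ((hA (measurableSet_singleton a)).inter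
      (hX (measurableSet_singleton x)))
  have m2 : ∀ (a : 𝒜), MeasurableSet {ω | Y0 ω = y ∧ A ω = a} := by
    intro a
    have : {ω | Y0 ω = y ∧ A ω = a} = Y0 ⁻¹' {y} ∩ A ⁻¹' {a} := by
      ext ω
      simp only [Set.mem_setOf_eq, Set.mem_inter_iff, Set.mem_preimage, Set.mem_singleton_iff]
    rw [this]
    exact (hY0 (measurableSet_singleton y)).inter (hA (measurableSet_singleton a))
  calc (∑' (a : 𝒜) (x : 𝒳) (s : Bool),
        pr P {ω | D ω = false ∧ Y ω = y ∧ A ω = a ∧ X ω = x ∧ S ω = s} /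
          (1 - cpr P {ω | D ω = true} {ω | A ω = a ∧ X ω = x ∧ S ω = s}))
      = ∑' (a : 𝒜) (x : 𝒳) (s : Bool), pr P {ω | Y0 ω = y ∧ A ω = a ∧ X ω = x ∧ S ω = s} :=
        tsum_congr fun a => tsum_congr fun x => tsum_congr fun s => key a x s
    _ = ∑' (a : 𝒜) (x : 𝒳), pr P {ω | Y0 ω = y ∧ A ω = a ∧ X ω = x} := by
        refine tsum_congr fun a => tsum_congr fun x => ?_
        rw [pr_tsum P (fun s : Bool => {ω | Y0 ω = y ∧ A ω = a ∧ X ω = x ∧ S ω = s})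
          (fun s => m4 a x s) ?_]
        · congr 1
          ext ω
          simp only [Set.mem_iUnion, Set.mem_setOf_eq]
          constructor
          · rintro ⟨s, h1, h2, h3, _⟩; exact ⟨h1, h2, h3⟩
          · rintro ⟨h1, h2, h3⟩; exact ⟨S ω, h1, h2, h3, rfl⟩
        · intro s s' hss
          apply Set.disjoint_left.mpr
          rintro ω ⟨_, _, _, h1⟩ ⟨_, _, _, h2⟩
          exact hss (h1 ▸ h2 ▸ rfl)
    _ = ∑' (a : 𝒜), pr P {ω | Y0 ω = y ∧ A ω = a} := by
        refine tsum_congr fun a => ?_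
        rw [pr_tsum P (fun x : 𝒳 => {ω | Y0 ω = y ∧ A ω = a ∧ X ω = x})
          (fun x => m3 a x) ?_]
        · congr 1
          ext ω
          simp only [Set.mem_iUnion, Set.mem_setOf_eq]
          constructor
          · rintro ⟨x, h1, h2, _⟩; exact ⟨h1, h2⟩
          · rintro ⟨h1, h2⟩; exact ⟨X ω, h1, h2, rfl⟩
        · intro x x' hxx
          apply Set.disjoint_left.mpr
          rintro ω ⟨_, _, h1⟩ ⟨_, _, h2⟩
          exact hxx (h1 ▸ h2 ▸ rfl)
    _ = pr P {ω | Y0 ω = y} := by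
        rw [pr_tsum P (fun a : 𝒜 => {ω | Y0 ω = y ∧ A ω = a}) (fun a => m2 a) ?_]
        · congr 1
          ext ω
          simp only [Set.mem_iUnion, Set.mem_setOf_eq]
          constructor
          · rintro ⟨a, h1, _⟩; exact h1
          · rintro h1; exact ⟨A ω, h1, rfl⟩
        · intro a a' haa
          apply Set.disjoint_left.mpr
          rintro ω ⟨_, h1⟩ ⟨_, h2⟩
          exact haa (h1 ▸ h2 ▸ rfl)
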